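/- Let B be a commutative ring with a ℤ-grading 𝒜, and let f ∈ 𝒜 1 be a homogeneous element of degree 1. Then the ring homomorphism from the Laurent polynomial ring over the degree-zero homogeneous localization B₍f₎ (Mathlib's HomogeneousLocalization.Away 𝒜 f) to the localization B_f = Localization.Away f, which on coefficients is the canonical inclusion B₍f₎ → B_f and which sends the Laurent variable T to the image of f in B_f, is bijective, i.e. a ring isomorphism B₍f₎[T,T⁻¹] ≅ B_f. -/

import Mathlib

open LaurentPolynomial HomogeneousLocalization DirectSum

namespace LaurentHomLocAux

variable {B : Type} [CommRing B] (𝒜 : ℤ → Submodule ℤ B) [GradedRing 𝒜] (f : B) (hf : f ∈ 𝒜 1)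

lemma lmk_eq' (x y : B) (s t : Submonoid.powers f) (h : (t : B) * x = (s : B) * y) :
    Localization.mk x s = Localization.mk y t :=
  Localization.mk_eq_mk_iff.mpr (Localization.r_of_eq h)

include hf

lemma powMem (n : ℕ) : f ^ n ∈ 𝒜 (n : ℤ) := by
  simpa using SetLike.pow_mem_graded n hf

/-- The element `b / f ^ d` of the degree-zero homogeneous localization, for `b ∈ 𝒜 d`. -/
noncomputable def el (d : ℤ) (b : 𝒜 d) : HomogeneousLocalization.Away 𝒜 f :=
  HomogeneousLocalization.mk
    ⟨(d.toNat : ℤ),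
     ⟨(b : B) * f ^ (-d).toNat, by
        have h := SetLike.mul_mem_graded b.2 (powMem 𝒜 f hf (-d).toNat)
        have e : d + (((-d).toNat : ℕ) : ℤ) = ((d.toNat : ℕ) : ℤ) := by omega
        rwa [e] at h⟩,
     ⟨f ^ d.toNat, powMem 𝒜 f hf d.toNat⟩,
     (⟨d.toNat, rfl⟩ : f ^ d.toNat ∈ Submonoid.powers f)⟩

lemma val_el (d : ℤ) (b : 𝒜 d) :
    (el 𝒜 f hf d b).val =
      Localization.mk ((b : B) * f ^ (-d).toNat) (⟨f ^ d.toNat, d.toNat, rfl⟩ : Submonoid.powers f) := rfl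

lemma el_zero (d : ℤ) : el 𝒜 f hf d 0 = 0 := by
  apply val_injective
  rw [val_el, val_zero, ZeroMemClass.coe_zero, zero_mul, Localization.mk_zero]

lemma el_add (d : ℤ) (x y : 𝒜 d) :
    el 𝒜 f hf d (x + y) = el 𝒜 f hf d x + el 𝒜 f hf d y := by
  apply val_injective
  rw [val_add, val_el, val_el, val_el, Localization.add_mk_self, AddMemClass.coe_add, add_mul]

lemma el_mul (i j : ℤ) (x : 𝒜 i) (y : 𝒜 j) :
    el 𝒜 f hf (i + j) (⟨(x : B) * (y : B), SetLike.mul_mem_graded x.2 y.2⟩ : 𝒜 (i + j))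
      = el 𝒜 f hf i x * el 𝒜 f hf j y := by
  apply val_injective
  rw [val_mul, val_el, val_el, val_el, Localization.mk_mul]
  apply lmk_eq'
  show f ^ i.toNat * f ^ j.toNat * ((x : B) * (y : B) * f ^ (-(i + j)).toNat)
      = f ^ (i + j).toNat * ((x : B) * f ^ (-i).toNat * ((y : B) * f ^ (-j).toNat))
  have h1 : f ^ i.toNat * f ^ j.toNat * f ^ (-(i + j)).toNat
      = f ^ (i + j).toNat * (f ^ (-i).toNat * f ^ (-j).toNat) := by
    have e : i.toNat + j.toNat + (-(i + j)).toNat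
        = (i + j).toNat + ((-i).toNat + (-j).toNat) := by omega
    rw [← pow_add, ← pow_add, ← pow_add, ← pow_add, e]
  linear_combination ((x : B) * (y : B)) * h1

lemma el_one : el 𝒜 f hf 0 (⟨1, SetLike.one_mem_graded 𝒜⟩ : 𝒜 0) = 1 := by
  apply val_injective
  rw [val_el, val_one, ← Localization.mk_one]
  apply lmk_eq'
  show (1 : B) * ((1 : B) * f ^ (-(0:ℤ)).toNat) = f ^ (0:ℤ).toNat * 1
  norm_num

/-- The ring homomorphism `⨁ 𝒜 i → B₍f₎[T, T⁻¹]`. -/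
noncomputable def toLaur : (⨁ i, ↥(𝒜 i)) →+* LaurentPolynomial (HomogeneousLocalization.Away 𝒜 f) :=
  DirectSum.toSemiring
    (fun d =>
      { toFun := fun b => LaurentPolynomial.C (el 𝒜 f hf d b) * T d
        map_zero' := by
          show LaurentPolynomial.C (el 𝒜 f hf d 0) * T d = 0
          rw [el_zero, map_zero, zero_mul]
        map_add' := fun x y => by
          show LaurentPolynomial.C (el 𝒜 f hf d (x + y)) * T d
              = LaurentPolynomial.C (el 𝒜 f hf d x) * T d
                + LaurentPolynomial.C (el 𝒜 f hf d y) * T d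
          rw [el_add, map_add, add_mul] })
    (by
      show LaurentPolynomial.C (el 𝒜 f hf 0 (⟨1, SetLike.one_mem_graded 𝒜⟩ : 𝒜 0)) * T 0 = 1
      rw [el_one, map_one, one_mul, T_zero])
    (by
      intro i j x y
      show LaurentPolynomial.C (el 𝒜 f hf (i + j)
            (⟨(x : B) * (y : B), SetLike.mul_mem_graded x.2 y.2⟩ : 𝒜 (i + j))) * T (i + j)
          = (LaurentPolynomial.C (el 𝒜 f hf i x) * T i) *
            (LaurentPolynomial.C (el 𝒜 f hf j y) * T j)
      rw [el_mul, map_mul, mul_mul_mul_comm, ← T_add])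

/-- The ring homomorphism `B → B₍f₎[T, T⁻¹]`. -/
noncomputable def toLaurB : B →+* LaurentPolynomial (HomogeneousLocalization.Away 𝒜 f) :=
  (toLaur 𝒜 f hf).comp (DirectSum.decomposeRingEquiv 𝒜 : B →+* (⨁ i, ↥(𝒜 i)))

lemma toLaurB_coe (d : ℤ) (b : 𝒜 d) :
    toLaurB 𝒜 f hf (b : B) = LaurentPolynomial.C (el 𝒜 f hf d b) * T d := by
  show toLaur 𝒜 f hf (DirectSum.decompose 𝒜 (b : B)) = _
  rw [DirectSum.decompose_coe, toLaur, DirectSum.toSemiring_of]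
  rfl

lemma toLaurB_f : toLaurB 𝒜 f hf f = T 1 := by
  have h := toLaurB_coe 𝒜 f hf 1 ⟨f, hf⟩
  rw [show ((⟨f, hf⟩ : 𝒜 1) : B) = f from rfl] at h
  rw [h]
  have h1 : el 𝒜 f hf 1 ⟨f, hf⟩ = 1 := by
    apply val_injective
    rw [val_el, val_one, ← Localization.mk_one]
    apply lmk_eq'
    show (1 : B) * (f * f ^ (-(1:ℤ)).toNat) = f ^ (1:ℤ).toNat * 1
    rw [show ((-(1:ℤ)).toNat) = 0 from rfl, show ((1:ℤ)).toNat = 1 from rfl]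
    ring
  rw [h1, map_one, one_mul]

/-- Abstract form of the main theorem. -/
lemma bij (Φ : LaurentPolynomial (HomogeneousLocalization.Away 𝒜 f) →+* Localization.Away f)
    (hsingle : ∀ (a : ℤ) (r : HomogeneousLocalization.Away 𝒜 f),
      Φ (AddMonoidAlgebra.single a r) = r.val *
        ((((IsLocalization.Away.algebraMap_isUnit
          (S := Localization.Away f) f).unit : (Localization.Away f)ˣ) ^ a :
            (Localization.Away f)ˣ) : Localization.Away f)) :
    Function.Bijective Φ := by
  classical
  by_cases hnt : Nontrivial (Localization.Away f)
  case neg =>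
    rw [not_nontrivial_iff_subsingleton] at hnt
    have h1 : Subsingleton (HomogeneousLocalization.Away 𝒜 f) :=
      ⟨fun a b => HomogeneousLocalization.val_injective _ (Subsingleton.elim _ _)⟩
    have h2 : Subsingleton (LaurentPolynomial (HomogeneousLocalization.Away 𝒜 f)) :=
      ⟨fun p q => AddMonoidAlgebra.ext (Finsupp.ext fun a => Subsingleton.elim _ _)⟩
    exact ⟨fun a b _ => Subsingleton.elim a b, fun y => ⟨0, Subsingleton.elim _ _⟩⟩
  case pos =>
  haveI := hnt
  set u : (Localization.Away f)ˣ :=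
    (IsLocalization.Away.algebraMap_isUnit (S := Localization.Away f) f).unit with hudef
  have hu : (u : Localization.Away f) = algebraMap B (Localization.Away f) f :=
    (IsLocalization.Away.algebraMap_isUnit (S := Localization.Away f) f).unit_spec
  set Ψ := toLaurB 𝒜 f hf with hΨdef
  have hΨf : Ψ f = T 1 := toLaurB_f 𝒜 f hf
  have hvT : Ψ f * T (-1) = 1 := by
    rw [hΨf, ← T_add]
    norm_num [T_zero]
  set Ψ' := Localization.awayLift Ψ f (isUnit_iff_exists_inv.mpr ⟨T (-1), hvT⟩) with hΨ'def
  have hlifteq : ∀ b : B, Ψ' (algebraMap B (Localization.Away f) b) = Ψ b := fun b =>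
    IsLocalization.Away.lift_eq f _ b
  -- `u` powers as algebra map values
  have hz : ∀ n : ℕ, ((u ^ (n : ℤ) : (Localization.Away f)ˣ) : Localization.Away f)
      = algebraMap B (Localization.Away f) (f ^ n) := by
    intro n
    rw [zpow_natCast, map_pow, ← hu, Units.val_pow_eq_pow_val]
  -- Φ ∘ Ψ = algebraMap
  have hPhiPsi : ∀ b : B, Φ (Ψ b) = algebraMap B (Localization.Away f) b := by
    intro b
    refine DirectSum.Decomposition.inductionOn 𝒜 (motive := fun b => Φ (Ψ b) = algebraMap B (Localization.Away f) b) ?_ ?_ ?_ b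
    · simp
    · intro d x
      rw [hΨdef, toLaurB_coe 𝒜 f hf d x, ← single_eq_C_mul_T, hsingle]
      set k := d.toNat with hk
      set e := (-d).toNat with he
      have hval : (el 𝒜 f hf d x).val * algebraMap B (Localization.Away f) (f ^ k)
          = algebraMap B (Localization.Away f) ((x : B) * f ^ e) := by
        rw [val_el, Localization.mk_eq_mk']
        exact IsLocalization.mk'_spec _ _ _
      have hde : d + (e : ℤ) = (k : ℤ) := by omega
      have key : ((el 𝒜 f hf d x).val * ((u ^ d : (Localization.Away f)ˣ) : Localization.Away f))
            * ((u ^ (e : ℤ) : (Localization.Away f)ˣ) : Localization.Away f)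
          = algebraMap B (Localization.Away f) (x : B)
            * ((u ^ (e : ℤ) : (Localization.Away f)ˣ) : Localization.Away f) := by
        rw [mul_assoc, ← Units.val_mul, ← zpow_add, hde, hz k, hz e, hval, map_mul]
      have key2 := congrArg (fun z : Localization.Away f =>
        z * (((u ^ (e : ℤ))⁻¹ : (Localization.Away f)ˣ) : Localization.Away f)) key
      simpa only [Units.mul_inv_cancel_right] using key2
    · intro x y hx hy
      rw [map_add, map_add, hx, hy, map_add]
  -- right inverse
  have hright : ∀ y, Φ (Ψ' y) = y := by
    have hcomp : Φ.comp Ψ' = RingHom.id (Localization.Away f) := by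
      apply IsLocalization.ringHom_ext (Submonoid.powers f)
      ext b
      simp only [RingHom.comp_apply, RingHom.id_apply, RingHom.coe_comp, Function.comp_apply]
      rw [hlifteq b]
      exact hPhiPsi b
    intro y
    exact RingHom.congr_fun hcomp y
  -- facts about Ψ' on powers of u
  have hPsi'u : Ψ' (u : Localization.Away f) = T 1 := by
    rw [hu, hlifteq, hΨf]
  have hPsi'uinv : Ψ' ((u⁻¹ : (Localization.Away f)ˣ) : Localization.Away f) = T (-1) := by
    have h1 : Ψ' (u : Localization.Away f) * Ψ' ((u⁻¹ : (Localization.Away f)ˣ) :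
        Localization.Away f) = 1 := by
      rw [← map_mul, Units.mul_inv, map_one]
    have h2 : (T (-1) * T (1 : ℤ) : LaurentPolynomial (HomogeneousLocalization.Away 𝒜 f)) = 1 := by
      rw [← T_add]; norm_num [T_zero]
    calc Ψ' ((u⁻¹ : (Localization.Away f)ˣ) : Localization.Away f)
        = (T (-1) * T 1) * Ψ' ((u⁻¹ : (Localization.Away f)ˣ) : Localization.Away f) := by
          rw [h2, one_mul]
      _ = T (-1) * (Ψ' (u : Localization.Away f) *
            Ψ' ((u⁻¹ : (Localization.Away f)ˣ) : Localization.Away f)) := by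
          rw [hPsi'u, mul_assoc]
      _ = T (-1) := by rw [h1, mul_one]
  have hmapu : ∀ m : ℤ, Ψ' ((u ^ m : (Localization.Away f)ˣ) : Localization.Away f) = T m := by
    intro m
    induction m using Int.induction_on with
    | zero => simpa [T_zero] using map_one Ψ'
    | succ i ih =>
        rw [zpow_add_one, Units.val_mul, map_mul, ih, hPsi'u, ← T_add]
    | pred i ih =>
        rw [zpow_sub_one, Units.val_mul, map_mul, ih, hPsi'uinv, ← T_sub]
  -- left inverse
  have hleft : Ψ'.comp Φ = RingHom.id (LaurentPolynomial (HomogeneousLocalization.Away 𝒜 f)) := by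
    apply AddMonoidAlgebra.ringHom_ext
    · intro r
      simp only [RingHom.comp_apply, RingHom.id_apply, RingHom.coe_comp, Function.comp_apply]
      rw [hsingle 0 r, zpow_zero, Units.val_one, mul_one]
      obtain ⟨⟨n, ⟨a, ha⟩, ⟨b', hb'⟩, j, (hb'' : f ^ j = b')⟩, rfl⟩ :=
        HomogeneousLocalization.mk_surjective r
      subst hb''
      have hfj : f ^ j ≠ 0 := by
        intro h
        have hsub : Subsingleton (Localization.Away f) :=
          IsLocalization.subsingleton (M := Submonoid.powers f) ⟨j, h⟩
        exact (not_subsingleton _) hsub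
      have hnj : n = (j : ℤ) :=
        DirectSum.degree_eq_of_mem_mem 𝒜 hb' (powMem 𝒜 f hf j) hfj
      subst hnj
      rw [show (HomogeneousLocalization.mk
          (⟨((j : ℕ) : ℤ), ⟨a, ha⟩, ⟨f ^ j, hb'⟩, ⟨j, rfl⟩⟩ :
            HomogeneousLocalization.NumDenSameDeg 𝒜 (Submonoid.powers f))).val
          = Localization.mk a (⟨f ^ j, j, rfl⟩ : Submonoid.powers f) from rfl]
      rw [Localization.awayLift_mk (f := Ψ) (r := f) (a := a) (v := T (-1)) (hv := hvT) (j := j)]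
      rw [hΨdef, toLaurB_coe 𝒜 f hf ((j : ℕ) : ℤ) ⟨a, ha⟩, T_pow, mul_assoc, ← T_add]
      rw [show ((j : ℤ) + (j : ℤ) * (-1)) = 0 by ring
, T_zero, mul_one,
        show ∀ x : HomogeneousLocalization.Away 𝒜 f,
          (AddMonoidAlgebra.single (0 : ℤ) x : LaurentPolynomial (HomogeneousLocalization.Away 𝒜 f))
            = LaurentPolynomial.C x from fun x => rfl]
      congr 1
      apply val_injective
      rw [val_el]
      rw [show (HomogeneousLocalization.mk
          (⟨((j : ℕ) : ℤ), ⟨a, ha⟩, ⟨f ^ j, hb'⟩, ⟨j, rfl⟩⟩ :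
            HomogeneousLocalization.NumDenSameDeg 𝒜 (Submonoid.powers f))).val
          = Localization.mk a (⟨f ^ j, j, rfl⟩ : Submonoid.powers f) from rfl]
      apply lmk_eq'
      show f ^ j * (a * f ^ (-(j : ℤ)).toNat) = f ^ ((j : ℤ)).toNat * a
      have e1 : (-(j : ℤ)).toNat = 0 := by omega
      have e2 : ((j : ℤ)).toNat = j := by omega
      rw [e1, e2, pow_zero, mul_one, mul_comm]
    · intro m
      simp only [RingHom.comp_apply, RingHom.id_apply, RingHom.coe_comp, Function.comp_apply]
      rw [hsingle m 1, HomogeneousLocalization.val_one, one_mul]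
      exact hmapu m
  exact Function.bijective_iff_has_inverse.mpr
    ⟨Ψ', fun x => RingHom.congr_fun hleft x, fun y => hright y⟩

end LaurentHomLocAux

/-- For a ℤ-graded commutative ring `B` and a homogeneous element `f` of
degree 1, the ring homomorphism from the Laurent polynomial ring over the degree-zero
homogeneous localization `B₍f₎` to the localization `B_f`, which on coefficients is the
canonical inclusion `B₍f₎ → B_f` and which sends the Laurent variable `T` to the image
of `f` in `B_f`, is bijective. -/
theorem laurent_homogeneousLocalization_bijective_to_away
    (B : Type) [CommRing B] (𝒜 : ℤ → Submodule ℤ B) [GradedRing 𝒜]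
    (f : B) (hf : f ∈ 𝒜 1) :
    Function.Bijective
      (AddMonoidAlgebra.liftNCRingHom
        (algebraMap (HomogeneousLocalization.Away 𝒜 f) (Localization.Away f))
        ((Units.coeHom (Localization.Away f)).comp
          (zpowersHom (Localization.Away f)ˣ
            (IsLocalization.Away.algebraMap_isUnit (S := Localization.Away f) f).unit))
        (fun _ _ => Commute.all _ _) :
        LaurentPolynomial (HomogeneousLocalization.Away 𝒜 f) →+* Localization.Away f) := by
  apply LaurentHomLocAux.bij 𝒜 f hf
  intro a r
  simp only [AddMonoidAlgebra.liftNCRingHom, RingHom.coe_mk, MonoidHom.coe_mk, OneHom.coe_mk,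
    AddMonoidHom.toFun_eq_coe, AddMonoidAlgebra.liftNC_single, AddMonoidHom.coe_coe,
    MonoidHom.coe_comp, Function.comp_apply, zpowersHom_apply, toAdd_ofAdd, Units.coeHom_apply,
    HomogeneousLocalization.algebraMap_apply]
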